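/- Let B and C be finite types with |B| ≥ 2 and |C| ≥ 2. Let R[B;C] be the subgroup of Aut((B × C)^ℤ) generated by the partial shift σ₂ together with the symbol permutations π̄ where π ranges over the permutations of B × C satisfying (π(b,c)).1 = b for all (b,c) ∈ B × C. Then R[B;C] is isomorphic, as a group, to P((ℤ → B), Perm C), where X = ℤ → B is the full shift (the whole space, as a subshift) and Perm C acts on C in the natural way. -/

import Mathlib

open Function

/-- The shift map on `ℤ → A`. -/
def shiftMap (A : Type*) : (ℤ → A) → (ℤ → A) := fun x i => x (i + 1)

/-- The shift map as a permutation of `ℤ → A`. -/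
def shiftPerm (A : Type*) : Equiv.Perm (ℤ → A) where
  toFun := shiftMap A
  invFun x i := x (i - 1)
  left_inv x := funext fun i => by simp [shiftMap]
  right_inv x := funext fun i => by simp [shiftMap]

/-- Finite types carry the discrete topology. -/
instance fintypeDiscreteTopology (A : Type*) [Fintype A] : TopologicalSpace A := ⊥

/-- The automorphism group of the full shift `A^ℤ`: shift-commuting self-homeomorphisms of
`ℤ → A`, as a subgroup of the permutation group of `ℤ → A`. -/
def FullShiftAut (A : Type*) [Fintype A] : Subgroup (Equiv.Perm (ℤ → A)) where
  carrier := { f | Continuous ⇑f ∧ Continuous ⇑f.symm ∧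
      ∀ x, f (shiftMap A x) = shiftMap A (f x) }
  one_mem' := ⟨continuous_id, continuous_id, fun _ => rfl⟩
  mul_mem' := by
    rintro f g ⟨hf1, hf2, hf3⟩ ⟨hg1, hg2, hg3⟩
    refine ⟨?_, ?_, fun x => ?_⟩
    · exact hf1.comp hg1
    · exact hg2.comp hf2
    · show f (g (shiftMap A x)) = shiftMap A (f (g x))
      rw [hg3, hf3]
  inv_mem' := by
    rintro f ⟨hf1, hf2, hf3⟩
    refine ⟨hf2, hf1, fun x => ?_⟩
    apply f.injective
    show f (f.symm (shiftMap A x)) = f (shiftMap A (f.symm x))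
    rw [Equiv.apply_symm_apply, hf3, Equiv.apply_symm_apply]

/-- The symbol permutation determined by a permutation of the alphabet. -/
def symbolPerm {A : Type*} (π : Equiv.Perm A) : Equiv.Perm (ℤ → A) :=
  Equiv.piCongrRight fun _ => π

/-- The partial shift on the first track. -/
def partialShift₁ (B C : Type*) : Equiv.Perm (ℤ → B × C) where
  toFun x i := ((x (i + 1)).1, (x i).2)
  invFun x i := ((x (i - 1)).1, (x i).2)
  left_inv x := funext fun i => by simp
  right_inv x := funext fun i => by simp

/-- The partial shift on the second track. -/
def partialShift₂ (B C : Type*) : Equiv.Perm (ℤ → B × C) where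
  toFun x i := ((x i).1, (x (i + 1)).2)
  invFun x i := ((x i).1, (x (i - 1)).2)
  left_inv x := funext fun i => by simp
  right_inv x := funext fun i => by simp

/-- `PAut[B;C]`: the subgroup of the automorphism group of `(B × C)^ℤ` generated by the two
partial shifts and all symbol permutations. -/
def PAut (B C : Type*) : Subgroup (Equiv.Perm (ℤ → B × C)) :=
  Subgroup.closure
    ({partialShift₁ B C, partialShift₂ B C} ∪ Set.range (symbolPerm (A := B × C)))

attribute [local instance] Classical.propDecidable

/-- The shift on `(ℤ → B) × A`: `ŝ(x, a) = (σ x, a)`. -/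
noncomputable def shiftFst (B A : Type*) : Equiv.Perm ((ℤ → B) × A) :=
  (shiftPerm B).prodCongr (Equiv.refl A)

/-- The controlled action `ctrl(g, C')` on `(ℤ → B) × A`: apply `g` on the second coordinate
exactly when the first coordinate lies in `C'`. -/
noncomputable def ctrlFull {B : Type*} {G : Type*} [Group G] {A : Type*} [MulAction G A]
    (g : G) (C' : Set (ℤ → B)) : Equiv.Perm ((ℤ → B) × A) where
  toFun p := if p.1 ∈ C' then (p.1, g • p.2) else p
  invFun p := if p.1 ∈ C' then (p.1, g⁻¹ • p.2) else p
  left_inv := by rintro ⟨x, a⟩; by_cases h : x ∈ C' <;> simp [h]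
  right_inv := by rintro ⟨x, a⟩; by_cases h : x ∈ C' <;> simp [h]

/-- The group `P(ℤ → B, G)` (with `X = ℤ → B` the full shift): generated by the shift together
with the controlled maps `ctrl(g, C')` over basic cylinders `C'`. -/
noncomputable def PGroupFull (B : Type*) (G : Type*) [Group G] (A : Type*) [MulAction G A] :
    Subgroup (Equiv.Perm ((ℤ → B) × A)) :=
  Subgroup.closure
    ({shiftFst B A} ∪ {f | ∃ (g : G) (i : ℤ) (s : B), f = ctrlFull g {x : ℤ → B | x i = s}})

/-- `R[B;C]`: the subgroup of `Aut((B × C)^ℤ)` generated by the partial shift on the second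
track together with symbol permutations fixing the first track. -/
def RGrp (B C : Type*) : Subgroup (Equiv.Perm (ℤ → B × C)) :=
  Subgroup.closure
    ({partialShift₂ B C} ∪
      {f | ∃ π : Equiv.Perm (B × C), (∀ a : B × C, (π a).1 = a.1) ∧ f = symbolPerm π})

namespace Stmt16Aux

open Equiv SemidirectProduct Subgroup

lemma shiftPerm_zpow (A : Type*) (n : ℤ) :
    ∀ (y : ℤ → A) (i : ℤ), (shiftPerm A ^ n) y i = y (i + n) := by
  induction n using Int.induction_on with
  | zero => intro y i; simp
  | succ k ih =>
    intro y i
    rw [zpow_add_one, Equiv.Perm.mul_apply, ih]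
    show y (i + (k : ℤ) + 1) = y (i + ((k : ℤ) + 1))
    congr 1; ring
  | pred k ih =>
    intro y i
    rw [zpow_sub_one, Equiv.Perm.mul_apply, ih]
    show y (i + -(k : ℤ) - 1) = y (i + (-(k : ℤ) - 1))
    congr 1; ring

lemma shiftPerm_zpow_zpow (A : Type*) (m k : ℤ) (y : ℤ → A) :
    (shiftPerm A ^ m) ((shiftPerm A ^ k) y) = (shiftPerm A ^ (k + m)) y := by
  funext j
  rw [shiftPerm_zpow, shiftPerm_zpow, shiftPerm_zpow]
  congr 1; ring

lemma partialShift₂_zpow (B C : Type*) (n : ℤ) :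
    ∀ (x : ℤ → B × C) (i : ℤ), (partialShift₂ B C ^ n) x i = ((x i).1, (x (i + n)).2) := by
  induction n using Int.induction_on with
  | zero => intro x i; simp
  | succ k ih =>
    intro x i
    rw [zpow_add_one, Equiv.Perm.mul_apply, ih]
    show ((x i).1, (x (i + (k : ℤ) + 1)).2) = ((x i).1, (x (i + ((k : ℤ) + 1))).2)
    rw [show i + (k : ℤ) + 1 = i + ((k : ℤ) + 1) by ring]
  | pred k ih =>
    intro x i
    rw [zpow_sub_one, Equiv.Perm.mul_apply, ih]
    show ((x i).1, (x (i + -(k : ℤ) - 1)).2) = ((x i).1, (x (i + (-(k : ℤ) - 1))).2)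
    rw [show i + -(k : ℤ) - 1 = i + (-(k : ℤ) - 1) by ring]

end Stmt16Aux
namespace Stmt16Aux

variable (B C : Type)

/-- The group of `Perm C`-valued functions on the full shift. -/
abbrev HGrp := (ℤ → B) → Equiv.Perm C

/-- Precomposition with a permutation, as an automorphism of `HGrp`. -/
def precompAut (e : Equiv.Perm (ℤ → B)) : MulAut (HGrp B C) where
  toFun h := h ∘ e
  invFun h := h ∘ e.symm
  left_inv h := by funext y; simp [Function.comp]
  right_inv h := by funext y; simp [Function.comp]
  map_mul' h h' := rfl

/-- The shift action of `ℤ` on `HGrp`. -/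
def phiS : Multiplicative ℤ →* MulAut (HGrp B C) where
  toFun g := precompAut B C (shiftPerm B ^ g.toAdd)
  map_one' := by
    refine MulEquiv.ext fun h => ?_
    funext y
    simp [precompAut]
  map_mul' g g' := by
    refine MulEquiv.ext fun h => ?_
    funext y
    simp only [precompAut, MulAut.mul_apply, MulEquiv.coe_mk, Equiv.coe_fn_mk, Function.comp,
      toAdd_mul]
    rw [shiftPerm_zpow_zpow]

/-- The abstract semidirect product. -/
abbrev SGrp := HGrp B C ⋊[phiS B C] Multiplicative ℤ

lemma phiS_apply (g : Multiplicative ℤ) (h : HGrp B C) :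
    phiS B C g h = h ∘ ⇑(shiftPerm B ^ g.toAdd) := rfl

end Stmt16Aux
namespace Stmt16Aux

variable (B C : Type)

/-- Apply `h` along the first track, position-dependently, on the second track. -/
def trackMapR (h : HGrp B C) : Equiv.Perm (ℤ → B × C) where
  toFun x i := ((x i).1, h ((shiftPerm B ^ i) fun j => (x j).1) (x i).2)
  invFun x i := ((x i).1, (h ((shiftPerm B ^ i) fun j => (x j).1))⁻¹ (x i).2)
  left_inv x := by funext i; simp
  right_inv x := by funext i; simp

lemma trackMapR_apply (h : HGrp B C) (x : ℤ → B × C) (i : ℤ) :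
    trackMapR B C h x i = ((x i).1, h ((shiftPerm B ^ i) fun j => (x j).1) (x i).2) := rfl

/-- `trackMapR` as a monoid hom. -/
def DR : HGrp B C →* Equiv.Perm (ℤ → B × C) where
  toFun := trackMapR B C
  map_one' := by
    refine Equiv.ext fun x => ?_
    funext i
    simp [trackMapR]
  map_mul' h h' := by
    refine Equiv.ext fun x => ?_
    funext i
    simp [trackMapR, Equiv.Perm.mul_apply]

/-- Powers of the partial shift, as a monoid hom. -/
def TR : Multiplicative ℤ →* Equiv.Perm (ℤ → B × C) where
  toFun g := partialShift₂ B C ^ g.toAdd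
  map_one' := by simp
  map_mul' g g' := by simp [toAdd_mul, zpow_add]

lemma condR : ∀ g, (DR B C).comp ((phiS B C g).toMonoidHom) =
    (MulAut.conj (TR B C g)).toMonoidHom.comp (DR B C) := by
  intro g
  refine MonoidHom.ext fun h => Equiv.ext fun x => funext fun i => ?_
  simp only [MonoidHom.comp_apply, MulEquiv.coe_toMonoidHom, MulAut.conj_apply,
    Equiv.Perm.mul_apply]
  show trackMapR B C (h ∘ ⇑(shiftPerm B ^ g.toAdd)) x i
      = (partialShift₂ B C ^ g.toAdd) (trackMapR B C h ((partialShift₂ B C ^ g.toAdd)⁻¹ x)) i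
  rw [show (partialShift₂ B C ^ g.toAdd)⁻¹ = partialShift₂ B C ^ (-g.toAdd) from
    (zpow_neg _ _).symm]
  simp only [trackMapR_apply, partialShift₂_zpow, Function.comp]
  rw [shiftPerm_zpow_zpow]
  simp

/-- The realization of the semidirect product inside `Aut((B×C)^ℤ)`. -/
def PsiR : SGrp B C →* Equiv.Perm (ℤ → B × C) :=
  SemidirectProduct.lift (DR B C) (TR B C) (condR B C)

/-- Apply `h` on the register, depending on the tape. -/
noncomputable def DP : HGrp B C →* Equiv.Perm ((ℤ → B) × C) where
  toFun h :=
    { toFun := fun p => (p.1, h p.1 p.2)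
      invFun := fun p => (p.1, (h p.1)⁻¹ p.2)
      left_inv := fun p => by simp
      right_inv := fun p => by simp }
  map_one' := by
    refine Equiv.ext fun p => ?_
    simp
  map_mul' h h' := by
    refine Equiv.ext fun p => ?_
    simp [Equiv.Perm.mul_apply, Prod.map]

lemma DP_apply (h : HGrp B C) (p : (ℤ → B) × C) : DP B C h p = (p.1, h p.1 p.2) := rfl

/-- Powers of the inverse shift on the first factor. -/
noncomputable def TP : Multiplicative ℤ →* Equiv.Perm ((ℤ → B) × C) where
  toFun g := (shiftFst B C)⁻¹ ^ g.toAdd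
  map_one' := by simp
  map_mul' g g' := by simp [toAdd_mul, zpow_add]

/-- The product-congruence monoid hom. -/
def prodFstHom : Equiv.Perm (ℤ → B) →* Equiv.Perm ((ℤ → B) × C) where
  toFun e := e.prodCongr (Equiv.refl C)
  map_one' := by
    refine Equiv.ext fun p => ?_
    simp
  map_mul' e e' := by
    refine Equiv.ext fun p => ?_
    simp [Equiv.Perm.mul_apply, Prod.map]

lemma shiftFst_zpow (n : ℤ) (p : (ℤ → B) × C) :
    (shiftFst B C ^ n) p = ((shiftPerm B ^ n) p.1, p.2) := by
  have : shiftFst B C = prodFstHom B C (shiftPerm B) := rfl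
  rw [this, ← map_zpow]
  simp [prodFstHom, Prod.map]

lemma condP : ∀ g, (DP B C).comp ((phiS B C g).toMonoidHom) =
    (MulAut.conj (TP B C g)).toMonoidHom.comp (DP B C) := by
  intro g
  refine MonoidHom.ext fun h => Equiv.ext fun p => ?_
  simp only [MonoidHom.comp_apply, MulEquiv.coe_toMonoidHom, MulAut.conj_apply,
    Equiv.Perm.mul_apply]
  show DP B C (h ∘ ⇑(shiftPerm B ^ g.toAdd)) p
      = ((shiftFst B C)⁻¹ ^ g.toAdd) (DP B C h (((shiftFst B C)⁻¹ ^ g.toAdd)⁻¹ p))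
  rw [show ((shiftFst B C)⁻¹ ^ g.toAdd)⁻¹ = shiftFst B C ^ g.toAdd by
        rw [inv_zpow, inv_inv],
      show (shiftFst B C)⁻¹ ^ g.toAdd = shiftFst B C ^ (-g.toAdd) by
        rw [inv_zpow, zpow_neg]]
  simp only [DP_apply, shiftFst_zpow, Function.comp]
  rw [shiftPerm_zpow_zpow]
  simp

/-- The realization of the semidirect product inside `Perm((ℤ→B) × C)`. -/
noncomputable def PsiP : SGrp B C →* Equiv.Perm ((ℤ → B) × C) :=
  SemidirectProduct.lift (DP B C) (TP B C) (condP B C)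

end Stmt16Aux
namespace Stmt16Aux

variable (B C : Type)

/-- The abstract shift generator. -/
def sGen : SGrp B C := SemidirectProduct.inr (Multiplicative.ofAdd 1)

/-- The function reading the symbol at the origin through a family of permutations. -/
def hfam (p : B → Equiv.Perm C) : HGrp B C := fun y => p (y 0)

/-- The controlled permutation function. -/
noncomputable def hctrl (g : Equiv.Perm C) (i : ℤ) (s : B) : HGrp B C :=
  fun y => if y i = s then g else 1

/-- Generators on the `R` side. -/
def GR : Set (SGrp B C) :=
  {sGen B C} ∪ {w | ∃ p : B → Equiv.Perm C, w = SemidirectProduct.inl (hfam B C p)}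

/-- Generators on the `P` side. -/
noncomputable def GP : Set (SGrp B C) :=
  {sGen B C} ∪
    {w | ∃ (g : Equiv.Perm C) (i : ℤ) (s : B), w = SemidirectProduct.inl (hctrl B C g i s)}

lemma inr_ofAdd_mem (i : ℤ) :
    (SemidirectProduct.inr (Multiplicative.ofAdd i) : SGrp B C) ∈ Subgroup.closure (GR B C) := by
  have h1 : (SemidirectProduct.inr (Multiplicative.ofAdd i) : SGrp B C) = sGen B C ^ i := by
    rw [sGen, ← map_zpow]
    congr 1
    rw [← ofAdd_zsmul]
    norm_num
  rw [h1]
  have hs : sGen B C ∈ GR B C := Or.inl rfl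
  exact Subgroup.zpow_mem (Subgroup.closure (GR B C)) (Subgroup.subset_closure hs) i

lemma hctrl_mem (g : Equiv.Perm C) (i : ℤ) (s : B) :
    (SemidirectProduct.inl (hctrl B C g i s) : SGrp B C) ∈ Subgroup.closure (GR B C) := by
  set p₀ : B → Equiv.Perm C := fun b => if b = s then g else 1 with hp₀
  have h1 : hctrl B C g i s = phiS B C (Multiplicative.ofAdd i) (hfam B C p₀) := by
    funext y
    rw [phiS_apply]
    show (if y i = s then g else 1) = p₀ (((shiftPerm B ^ (Multiplicative.ofAdd i).toAdd)) y 0)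
    rw [shiftPerm_zpow]
    simp [hp₀]
  rw [h1, SemidirectProduct.inl_aut]
  exact Subgroup.mul_mem _
    (Subgroup.mul_mem _ (inr_ofAdd_mem B C i)
      (Subgroup.subset_closure (Or.inr ⟨p₀, rfl⟩)))
    (Subgroup.inv_mem _ (inr_ofAdd_mem B C i))

lemma hfam_mem [Fintype B] (p : B → Equiv.Perm C) :
    (SemidirectProduct.inl (hfam B C p) : SGrp B C) ∈ Subgroup.closure (GP B C) := by
  classical
  suffices h : ∀ (s : Finset B) (p : B → Equiv.Perm C), (∀ b ∉ s, p b = 1) →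
      (SemidirectProduct.inl (hfam B C p) : SGrp B C) ∈ Subgroup.closure (GP B C) by
    exact h Finset.univ p (fun b hb => absurd (Finset.mem_univ b) hb)
  intro s
  induction s using Finset.induction_on with
  | empty =>
    intro p hp
    have : hfam B C p = 1 := by
      funext y
      exact hp (y 0) (Finset.notMem_empty _)
    rw [this, map_one]
    exact Subgroup.one_mem _
  | insert _ _ ha ih =>
    rename_i a s
    intro p hp
    set p' : B → Equiv.Perm C := fun b => if b = a then 1 else p b with hp'
    have hsplit : hfam B C p = hctrl B C (p a) 0 a * hfam B C p' := by
      funext y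
      show p (y 0) = (if y 0 = a then p a else 1) * p' (y 0)
      by_cases h : y 0 = a <;> simp [h, hp']
    rw [hsplit, map_mul]
    refine Subgroup.mul_mem _
      (Subgroup.subset_closure (Or.inr ⟨p a, 0, a, rfl⟩)) (ih p' fun b hb => ?_)
    by_cases hba : b = a
    · simp [hp', hba]
    · simp [hp', hba]
      exact hp b (by simp [Finset.mem_insert, hba, hb])

lemma closure_GP_eq [Fintype B] :
    Subgroup.closure (GP B C) = Subgroup.closure (GR B C) := by
  apply le_antisymm
  · rw [Subgroup.closure_le]
    rintro w (rfl | ⟨g, i, s, rfl⟩)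
    · exact Subgroup.subset_closure (Or.inl rfl)
    · exact hctrl_mem B C g i s
  · rw [Subgroup.closure_le]
    rintro w (rfl | ⟨p, rfl⟩)
    · exact Subgroup.subset_closure (Or.inl rfl)
    · exact hfam_mem B C p

end Stmt16Aux
namespace Stmt16Aux

variable (B C : Type)

/-- The symbol permutation of `B × C` determined by a family of permutations of `C`. -/
def famPerm (p : B → Equiv.Perm C) : Equiv.Perm (B × C) where
  toFun a := (a.1, p a.1 a.2)
  invFun a := (a.1, (p a.1)⁻¹ a.2)
  left_inv a := by simp
  right_inv a := by simp

lemma famPerm_fst (p : B → Equiv.Perm C) (a : B × C) : (famPerm B C p a).1 = a.1 := rfl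

variable {B C}

/-- The family of permutations of `C` extracted from a first-track-fixing permutation. -/
def pOf (π : Equiv.Perm (B × C)) (hπ : ∀ a, (π a).1 = a.1) (b : B) : Equiv.Perm C where
  toFun c := (π (b, c)).2
  invFun c := (π.symm (b, c)).2
  left_inv c := by
    have h1 : ((b, (π (b, c)).2) : B × C) = π (b, c) := Prod.ext (hπ (b, c)).symm rfl
    show (π.symm (b, (π (b, c)).2)).2 = c
    rw [h1, Equiv.symm_apply_apply]
  right_inv c := by
    have h0 : (π.symm (b, c)).1 = b := by
      have h := hπ (π.symm (b, c))
      rw [Equiv.apply_symm_apply] at h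
      exact h.symm
    have h1 : ((b, (π.symm (b, c)).2) : B × C) = π.symm (b, c) := Prod.ext h0.symm rfl
    show (π (b, (π.symm (b, c)).2)).2 = c
    rw [h1, Equiv.apply_symm_apply]

lemma famPerm_pOf (π : Equiv.Perm (B × C)) (hπ : ∀ a, (π a).1 = a.1) :
    famPerm B C (pOf π hπ) = π := by
  refine Equiv.ext fun a => ?_
  show (a.1, (π (a.1, a.2)).2) = π a
  exact Prod.ext (hπ a).symm rfl

variable (B C)

lemma PsiR_sGen : PsiR B C (sGen B C) = partialShift₂ B C := by
  rw [sGen, PsiR, SemidirectProduct.lift_inr]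
  show partialShift₂ B C ^ (Multiplicative.ofAdd (1 : ℤ)).toAdd = _
  simp

lemma PsiR_inl_hfam (p : B → Equiv.Perm C) :
    PsiR B C (SemidirectProduct.inl (hfam B C p)) = symbolPerm (famPerm B C p) := by
  rw [PsiR, SemidirectProduct.lift_inl]
  refine Equiv.ext fun x => funext fun i => ?_
  show trackMapR B C (hfam B C p) x i = _
  rw [trackMapR_apply]
  show ((x i).1, p (((shiftPerm B ^ i) fun j => (x j).1) 0) (x i).2) = famPerm B C p (x i)
  rw [shiftPerm_zpow]
  simp [famPerm]

lemma PsiP_sGen : PsiP B C (sGen B C) = (shiftFst B C)⁻¹ := by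
  rw [sGen, PsiP, SemidirectProduct.lift_inr]
  show (shiftFst B C)⁻¹ ^ (Multiplicative.ofAdd (1 : ℤ)).toAdd = _
  simp

lemma PsiP_inl_hctrl (g : Equiv.Perm C) (i : ℤ) (s : B) :
    PsiP B C (SemidirectProduct.inl (hctrl B C g i s))
      = ctrlFull g {x : ℤ → B | x i = s} := by
  rw [PsiP, SemidirectProduct.lift_inl]
  refine Equiv.ext fun p => ?_
  show (p.1, (if p.1 i = s then g else 1) p.2) = ctrlFull g {x : ℤ → B | x i = s} p
  by_cases h : p.1 i = s
  · simp [ctrlFull, h, Equiv.Perm.smul_def]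
  · simp [ctrlFull, h]

/-- The common abstract subgroup. -/
def KGrp : Subgroup (SGrp B C) := Subgroup.closure (GR B C)

lemma mapR : (KGrp B C).map (PsiR B C) = RGrp B C := by
  rw [KGrp, MonoidHom.map_closure]
  apply le_antisymm
  · rw [Subgroup.closure_le]
    rintro w ⟨v, (rfl | ⟨p, rfl⟩), rfl⟩
    · rw [PsiR_sGen]
      exact Subgroup.subset_closure (Or.inl rfl)
    · rw [PsiR_inl_hfam]
      exact Subgroup.subset_closure (Or.inr ⟨famPerm B C p, famPerm_fst B C p, rfl⟩)
  · rw [RGrp, Subgroup.closure_le]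
    rintro w (rfl | ⟨π, hπ, rfl⟩)
    · exact Subgroup.subset_closure ⟨sGen B C, Or.inl rfl, PsiR_sGen B C⟩
    · exact Subgroup.subset_closure ⟨SemidirectProduct.inl (hfam B C (pOf π hπ)),
        Or.inr ⟨pOf π hπ, rfl⟩, by rw [PsiR_inl_hfam, famPerm_pOf]⟩

lemma mapP [Fintype B] : (KGrp B C).map (PsiP B C) = PGroupFull B (Equiv.Perm C) C := by
  rw [KGrp, ← closure_GP_eq, MonoidHom.map_closure]
  apply le_antisymm
  · rw [Subgroup.closure_le]
    rintro w ⟨v, (rfl | ⟨g, i, s, rfl⟩), rfl⟩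
    · rw [PsiP_sGen, PGroupFull]
      exact Subgroup.inv_mem _ (Subgroup.subset_closure (Or.inl rfl))
    · rw [PsiP_inl_hctrl]
      exact Subgroup.subset_closure (Or.inr ⟨g, i, s, rfl⟩)
  · rw [PGroupFull, Subgroup.closure_le]
    rintro w (rfl | ⟨g, i, s, rfl⟩)
    · have h1 : shiftFst B C = (PsiP B C (sGen B C))⁻¹ := by rw [PsiP_sGen, inv_inv]
      rw [h1]
      exact Subgroup.inv_mem _
        (Subgroup.subset_closure ⟨sGen B C, Or.inl rfl, rfl⟩)
    · exact Subgroup.subset_closure ⟨SemidirectProduct.inl (hctrl B C g i s),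
        Or.inr ⟨g, i, s, rfl⟩, PsiP_inl_hctrl B C g i s⟩
end Stmt16Aux
namespace Stmt16Aux

variable (B C : Type)

lemma PsiR_injective [Fintype B] [Fintype C]
    (hB : 2 ≤ Fintype.card B) (hC : 2 ≤ Fintype.card C) :
    Function.Injective ⇑(PsiR B C) := by
  rw [injective_iff_map_eq_one]
  rintro ⟨h, g⟩ ha
  have hmul : trackMapR B C h * (partialShift₂ B C ^ g.toAdd) = 1 := ha
  have key : ∀ (x : ℤ → B × C) (i : ℤ),
      h ((shiftPerm B ^ i) fun j => (x j).1) ((x (i + g.toAdd)).2) = (x i).2 := by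
    intro x i
    have h1 : trackMapR B C h ((partialShift₂ B C ^ g.toAdd) x) = x := by
      rw [← Equiv.Perm.mul_apply, hmul]
      rfl
    have h2 := congrFun h1 i
    rw [trackMapR_apply] at h2
    simp only [partialShift₂_zpow] at h2
    exact congrArg Prod.snd h2
  obtain ⟨b₀⟩ : Nonempty B := Fintype.card_pos_iff.mp (by omega)
  obtain ⟨c₀, c₁, hcc⟩ := Fintype.one_lt_card_iff.mp (show 1 < Fintype.card C by omega)
  have hn : g.toAdd = 0 := by
    by_contra hn
    have k1 := key (fun j => (b₀, if j = g.toAdd then c₁ else c₀)) 0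
    have k2 := key (fun j => (b₀, c₀)) 0
    simp only [zero_add] at k1 k2
    simp only [if_true] at k1
    rw [if_neg (fun he : (0 : ℤ) = g.toAdd => hn he.symm)] at k1
    exact hcc ((h _).injective (k2.trans k1.symm))
  have hh : h = 1 := by
    funext y
    refine Equiv.ext fun c => ?_
    have k := key (fun j => (y j, c)) 0
    rw [hn] at k
    simpa using k
  have hg : g = 1 := Multiplicative.toAdd.injective (by rw [hn]; rfl)
  rw [hh, hg]
  rfl

lemma PsiP_injective [Fintype B] [Fintype C]
    (hB : 2 ≤ Fintype.card B) (hC : 2 ≤ Fintype.card C) :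
    Function.Injective ⇑(PsiP B C) := by
  rw [injective_iff_map_eq_one]
  rintro ⟨h, g⟩ ha
  have hmul : (DP B C h) * ((shiftFst B C)⁻¹ ^ g.toAdd) = 1 := ha
  have key : ∀ (x : ℤ → B) (a : C),
      (((shiftPerm B ^ (-g.toAdd)) x), h ((shiftPerm B ^ (-g.toAdd)) x) a) = (x, a) := by
    intro x a
    have h1 : DP B C h (((shiftFst B C)⁻¹ ^ g.toAdd) (x, a)) = (x, a) := by
      rw [← Equiv.Perm.mul_apply, hmul]
      rfl
    rw [show (shiftFst B C)⁻¹ ^ g.toAdd = shiftFst B C ^ (-g.toAdd) by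
      rw [inv_zpow, zpow_neg]] at h1
    rw [shiftFst_zpow] at h1
    exact h1
  obtain ⟨c⟩ : Nonempty C := Fintype.card_pos_iff.mp (by omega)
  obtain ⟨b₀, b₁, hbb⟩ := Fintype.one_lt_card_iff.mp (show 1 < Fintype.card B by omega)
  have hn : g.toAdd = 0 := by
    by_contra hn
    have k := key (fun j => if j = -g.toAdd then b₁ else b₀) c
    have k1 := congrFun (congrArg Prod.fst k) 0
    dsimp only at k1
    rw [shiftPerm_zpow] at k1
    simp only [zero_add] at k1
    simp only [if_true] at k1
    rw [if_neg (fun he : (0 : ℤ) = -g.toAdd => hn (by omega))] at k1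
    exact hbb k1.symm
  have hh : h = 1 := by
    funext y
    refine Equiv.ext fun a => ?_
    have k := key y a
    rw [hn] at k
    simp only [neg_zero, zpow_zero, Equiv.Perm.one_apply] at k
    simpa using congrArg Prod.snd k
  rw [hh]
  rw [show g = 1 from Multiplicative.toAdd.injective (by rw [hn]; rfl)]
  rfl

end Stmt16Aux
/-- `R[B;C] ≅ P((ℤ → B), Perm C)` with the natural action of `Perm C` on `C`. -/
theorem stmt16 (B C : Type) [Fintype B] [Fintype C]
    (hB : 2 ≤ Fintype.card B) (hC : 2 ≤ Fintype.card C) :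
    Nonempty (↥(RGrp B C) ≃* ↥(PGroupFull B (Equiv.Perm C) C)) := by
  refine ⟨?_⟩
  have e1 : ↥(RGrp B C) ≃* ↥((Stmt16Aux.KGrp B C).map (Stmt16Aux.PsiR B C)) :=
    MulEquiv.subgroupCongr (Stmt16Aux.mapR B C).symm
  have e2 := (Subgroup.equivMapOfInjective (Stmt16Aux.KGrp B C) (Stmt16Aux.PsiR B C)
    (Stmt16Aux.PsiR_injective B C hB hC)).symm
  have e3 := Subgroup.equivMapOfInjective (Stmt16Aux.KGrp B C) (Stmt16Aux.PsiP B C)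
    (Stmt16Aux.PsiP_injective B C hB hC)
  have e4 : ↥((Stmt16Aux.KGrp B C).map (Stmt16Aux.PsiP B C))
      ≃* ↥(PGroupFull B (Equiv.Perm C) C) :=
    MulEquiv.subgroupCongr (Stmt16Aux.mapP B C)
  exact ((e1.trans e2).trans e3).trans e4
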